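/- Let G be a second-countable étale groupoid. Then G is effective if and only if the set {x ∈ G⁽⁰⁾ : G^x_x = {x}} of units with trivial isotropy group is dense in G⁽⁰⁾. -/

import Mathlib

/-- A groupoid in the sense of Renault/Hahn: a set `G` with a set of composable
pairs (encoded by the relation `Comp`), a multiplication defined on composable pairs
(encoded by a total function `mul` whose values on non-composable pairs are irrelevant),
and an inversion `inv`. -/
structure RGroupoid (G : Type*) where
  /-- `Comp α β` means `(α, β) ∈ G⁽²⁾`. -/
  Comp : G → G → Prop
  /-- the multiplication map -/
  mul : G → G → G
  /-- the inversion map -/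
  inv : G → G
  inv_inv : ∀ γ, inv (inv γ) = γ
  comp_mul_left : ∀ {α β γ}, Comp α β → Comp β γ → Comp (mul α β) γ
  comp_mul_right : ∀ {α β γ}, Comp α β → Comp β γ → Comp α (mul β γ)
  mul_assoc : ∀ {α β γ}, Comp α β → Comp β γ → mul (mul α β) γ = mul α (mul β γ)
  comp_inv : ∀ γ, Comp γ (inv γ)
  inv_mul_cancel : ∀ {γ η}, Comp γ η → mul (inv γ) (mul γ η) = η
  mul_inv_cancel : ∀ {γ η}, Comp γ η → mul (mul γ η) (inv η) = γ

namespace RGroupoid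

variable {G : Type*} (S : RGroupoid G)

/-- The range map `r(γ) = γγ⁻¹`. -/
def r (γ : G) : G := S.mul γ (S.inv γ)

/-- The source map `s(γ) = γ⁻¹γ`. -/
def s (γ : G) : G := S.mul (S.inv γ) γ

/-- The unit space `G⁽⁰⁾ = {γ⁻¹γ : γ ∈ G}`. -/
def units : Set G := {x | ∃ γ, S.s γ = x}

end RGroupoid

/-- A topological groupoid: a groupoid with a locally compact topology for which the unit
space is Hausdorff in the relative topology, `r`, `s` and inversion are continuous, and
multiplication is continuous on the set of composable pairs with the relative topology. -/
structure IsTopGroupoid {G : Type*} [TopologicalSpace G] (S : RGroupoid G) : Prop where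
  locallyCompact : LocallyCompactSpace G
  t2_units : T2Space S.units
  continuous_r : Continuous S.r
  continuous_s : Continuous S.s
  continuous_inv : Continuous S.inv
  continuous_mul : Continuous fun p : {p : G × G // S.Comp p.1 p.2} => S.mul p.1.1 p.1.2

/-- An étale groupoid: a topological groupoid in which the range map `r : G → G` is a
local homeomorphism. -/
structure IsEtaleGroupoid {G : Type*} [TopologicalSpace G] (S : RGroupoid G)
    extends IsTopGroupoid S : Prop where
  isLocalHomeomorph_r : IsLocalHomeomorph S.r

namespace RGroupoid

/-- `UV = {αβ : α ∈ U, β ∈ V, (α,β) ∈ G⁽²⁾}`. -/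
def mulSet {G : Type*} (S : RGroupoid G) (U V : Set G) : Set G :=
  {g | ∃ α ∈ U, ∃ β ∈ V, S.Comp α β ∧ S.mul α β = g}

end RGroupoid

/-- A subset `B` of an étale groupoid is a bisection if it is contained in an open set `U`
on which `r` and `s` restrict to homeomorphisms onto open subsets of the unit space. -/
def IsBisection {G : Type*} [TopologicalSpace G] (S : RGroupoid G) (B : Set G) : Prop :=
  ∃ U : Set G, B ⊆ U ∧ IsOpen U ∧ IsOpen (S.r '' U) ∧ IsOpen (S.s '' U) ∧
    IsHomeomorph (fun x : U => (⟨S.r x, Set.mem_image_of_mem S.r x.2⟩ : S.r '' U)) ∧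
    IsHomeomorph (fun x : U => (⟨S.s x, Set.mem_image_of_mem S.s x.2⟩ : S.s '' U))


section Aux

namespace RGroupoid

variable {G : Type*} (S : RGroupoid G)

lemma comp_inv' (γ : G) : S.Comp (S.inv γ) γ := by
  have := S.comp_inv (S.inv γ); rwa [S.inv_inv] at this

/-- `r δ` is an idempotent with trivial range and source. -/
lemma r_r (δ : G) : S.r (S.r δ) = S.r δ ∧ S.s (S.r δ) = S.r δ := by
  set e := S.mul δ (S.inv δ) with he
  have h1 : S.Comp δ (S.inv δ) := S.comp_inv δ
  have h2 : S.Comp (S.inv δ) δ := S.comp_inv' δ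
  have h3 : S.Comp (S.inv δ) e := S.comp_mul_right h2 h1
  have h4 : S.Comp e δ := S.comp_mul_left h1 h2
  have h5 : S.Comp e e := S.comp_mul_right h4 h1
  have h6 : S.mul (S.inv δ) e = S.inv δ := S.inv_mul_cancel h1
  have h7 : S.mul e e = e := by
    rw [he, S.mul_assoc h1 h3, h6]
  have h8 : S.mul e (S.inv e) = e := by
    have := S.mul_inv_cancel h5; rwa [h7] at this
  have h9 : S.mul (S.inv e) e = e := by
    have := S.inv_mul_cancel h5; rwa [h7] at this
  exact ⟨h8, h9⟩

lemma s_eq_r_inv (γ : G) : S.s γ = S.r (S.inv γ) := by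
  simp [RGroupoid.s, RGroupoid.r, S.inv_inv]

lemma mem_units_iff (x : G) : x ∈ S.units ↔ S.r x = x := by
  constructor
  · rintro ⟨γ, rfl⟩
    rw [S.s_eq_r_inv γ]; exact (S.r_r (S.inv γ)).1
  · intro h
    exact ⟨S.inv x, by rw [S.s_eq_r_inv (S.inv x), S.inv_inv, h]⟩

lemma units_r {x : G} (hx : x ∈ S.units) : S.r x = x := (S.mem_units_iff x).1 hx

lemma units_s {x : G} (hx : x ∈ S.units) : S.s x = x := by
  obtain ⟨γ, rfl⟩ := hx
  rw [S.s_eq_r_inv γ]; exact (S.r_r (S.inv γ)).2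

lemma s_mem_units (γ : G) : S.s γ ∈ S.units := ⟨γ, rfl⟩

end RGroupoid

open RGroupoid TopologicalSpace

variable {G : Type*} [TopologicalSpace G] {S : RGroupoid G}

/-- In an étale groupoid, the unit space is open. -/
lemma units_isOpen (hS : IsEtaleGroupoid S) : IsOpen S.units := by
  rw [isOpen_iff_forall_mem_open]
  intro x hx
  obtain ⟨e, hxe, hre⟩ := hS.isLocalHomeomorph_r x
  refine ⟨e.target, ?_, e.open_target, ?_⟩
  · intro y hy
    rw [← e.image_source_eq_target] at hy
    obtain ⟨z, hz, rfl⟩ := hy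
    rw [S.mem_units_iff, ← hre]
    exact (S.r_r z).1
  · have h2 : S.r x ∈ e.target := by rw [hre]; exact e.map_source hxe
    rwa [S.units_r hx] at h2

lemma units_isClosed [T2Space G] (hS : IsEtaleGroupoid S) : IsClosed S.units := by
  have : S.units = {x | S.r x = x} := Set.ext fun x => S.mem_units_iff x
  rw [this]
  exact isClosed_eq hS.continuous_r continuous_id

lemma isLocalHomeomorph_s (hS : IsEtaleGroupoid S) : IsLocalHomeomorph S.s := by
  have hinv : IsLocalHomeomorph S.inv :=
    (Homeomorph.mk ⟨S.inv, S.inv, S.inv_inv, S.inv_inv⟩ hS.continuous_inv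
      hS.continuous_inv).isLocalHomeomorph
  have hcomp : S.s = S.r ∘ S.inv := funext fun γ => S.s_eq_r_inv γ
  rw [hcomp]
  exact hS.isLocalHomeomorph_r.comp hinv

end Aux

open TopologicalSpace in
/-- A second-countable (Hausdorff) étale groupoid is effective (the interior of the
isotropy subgroupoid is the unit space) iff the set of units with trivial isotropy group
is dense in the unit space. -/
theorem effective_iff_trivial_isotropy_dense {G : Type*} [TopologicalSpace G]
    [SecondCountableTopology G] [T2Space G] (S : RGroupoid G) (hS : IsEtaleGroupoid S) :
    interior {γ : G | S.r γ = S.s γ} = S.units ↔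
      S.units ⊆ closure {x : G | x ∈ S.units ∧ ∀ γ, S.r γ = x → S.s γ = x → γ = x} := by
  set Iso : Set G := {γ : G | S.r γ = S.s γ} with hIso
  set T : Set G := {x : G | x ∈ S.units ∧ ∀ γ, S.r γ = x → S.s γ = x → γ = x} with hT
  have hUopen : IsOpen S.units := units_isOpen hS
  have hUclosed : IsClosed S.units := units_isClosed hS
  have hUIso : S.units ⊆ Iso := by
    intro x hx
    show S.r x = S.s x
    rw [S.units_r hx, S.units_s hx]
  constructor
  · -- effective → dense
    intro heff
    set C : Set G := Iso ∩ S.unitsᶜ with hC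
    have hCclosed : IsClosed C :=
      (isClosed_eq hS.continuous_r hS.continuous_s).inter hUopen.isClosed_compl
    set ι : Set (Set G) := {b | b ∈ countableBasis G ∧
        ∃ e : OpenPartialHomeomorph G G, b ⊆ e.source ∧ S.s = e} with hι
    have hιct : ι.Countable := (countable_countableBasis G).mono fun b hb => hb.1
    haveI : Countable ι := hιct.to_subtype
    -- each closure (s '' (b ∩ C)) has empty interior
    have key : ∀ b : ι, interior (closure (S.s '' ((b : Set G) ∩ C))) = ∅ := by
      rintro ⟨b, hbB, e, hbe, hse⟩
      set E : Set G := S.s '' (b ∩ C) with hE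
      have hbopen : IsOpen b := (isBasis_countableBasis G).isOpen hbB
      have hO : IsOpen (S.s '' b) := by
        rw [hse]; exact e.isOpen_image_of_subset_source hbopen hbe
      -- E is relatively closed in s '' b
      have hrel : closure E ∩ (S.s '' b) ⊆ E := by
        rintro y ⟨hyc, z, hzb, rfl⟩
        by_contra hyE
        have hzC : z ∉ C := fun hzC => hyE ⟨z, ⟨hzb, hzC⟩, rfl⟩
        set M : Set G := S.s '' (b ∩ Cᶜ) with hM
        have hMopen : IsOpen M := by
          rw [hM, hse]
          exact e.isOpen_image_of_subset_source (hbopen.inter hCclosed.isOpen_compl)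
            ((Set.inter_subset_left).trans hbe)
        have hszM : S.s z ∈ M := ⟨z, ⟨hzb, hzC⟩, rfl⟩
        obtain ⟨w, hwM, hwE⟩ := (mem_closure_iff.mp hyc) M hMopen hszM
        obtain ⟨u, huN, hus⟩ := hwM
        obtain ⟨v, hvbC, hvs⟩ := hwE
        have huv : u = v := by
          rw [hse] at hus hvs
          exact e.injOn (hbe huN.1) (hbe hvbC.1) (hus.trans hvs.symm)
        exact huN.2 (huv ▸ hvbC.2)
      -- interior of closure E is empty
      by_contra hne
      rw [← Ne, ← Set.nonempty_iff_ne_empty] at hne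
      obtain ⟨v, hv⟩ := hne
      obtain ⟨w, hwV, hwE⟩ :=
        (mem_closure_iff.mp (interior_subset hv)) _ isOpen_interior hv
      have hwO : w ∈ S.s '' b := Set.image_mono Set.inter_subset_left hwE
      -- the open set P
      set P : Set G := b ∩ S.s ⁻¹' (interior (closure E) ∩ S.s '' b) with hP
      have hPopen : IsOpen P :=
        hbopen.inter ((isOpen_interior.inter hO).preimage hS.continuous_s)
      have hWsub : interior (closure E) ∩ S.s '' b ⊆ E := fun y hy =>
        hrel ⟨interior_subset hy.1, hy.2⟩
      have hPC : P ⊆ C := by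
        intro p hp
        obtain ⟨u, hubC, hus⟩ := hWsub hp.2
        have : u = p := by
          rw [hse] at hus
          exact e.injOn (hbe hubC.1) (hbe hp.1) hus
        exact this ▸ hubC.2
      obtain ⟨u, hubC, hus⟩ := hWsub ⟨hwV, hwO⟩
      have huP : u ∈ P := ⟨hubC.1, by rw [Set.mem_preimage, hus]; exact ⟨hwV, hwO⟩⟩
      have hPIso : P ⊆ interior Iso :=
        interior_maximal (fun p hp => (hPC hp).1) hPopen
      rw [heff] at hPIso
      exact (hPC huP).2 (hPIso huP)
    -- Baire category
    haveI := hS.locallyCompact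
    have hDdense : Dense (⋂ b : ι, (closure (S.s '' ((b : Set G) ∩ C)))ᶜ) := by
      refine dense_iInter_of_isOpen (fun b => isClosed_closure.isOpen_compl) (fun b => ?_)
      exact interior_eq_empty_iff_dense_compl.mp (key b)
    intro x hx
    rw [mem_closure_iff]
    intro V hVopen hxV
    have hVU : IsOpen (V ∩ S.units) := hVopen.inter hUopen
    obtain ⟨d, hdD, hdVU⟩ := hDdense.exists_mem_open hVU ⟨x, hxV, hx⟩
    refine ⟨d, hdVU.1, hdVU.2, ?_⟩
    intro γ hrγ hsγ
    by_contra hγd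
    have hγIso : γ ∈ Iso := by show S.r γ = S.s γ; rw [hrγ, hsγ]
    have hγU : γ ∉ S.units := fun h => hγd (by rw [← hsγ, S.units_s h])
    have hγC : γ ∈ C := ⟨hγIso, hγU⟩
    obtain ⟨e, hγe, hse⟩ := isLocalHomeomorph_s hS γ
    obtain ⟨b, hbB, hγb, hbe⟩ :=
      (isBasis_countableBasis G).exists_subset_of_mem_open hγe e.open_source
    have hbι : b ∈ ι := ⟨hbB, e, hbe, hse⟩
    have hdE : d ∈ S.s '' (b ∩ C) := ⟨γ, ⟨hγb, hγC⟩, hsγ⟩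
    exact (Set.mem_iInter.mp hdD ⟨b, hbι⟩) (subset_closure hdE)
  · -- dense → effective
    intro hdense
    apply subset_antisymm
    · -- interior Iso ⊆ units
      intro γ hγ
      have hγIso : γ ∈ Iso := interior_subset hγ
      rw [← hUclosed.closure_eq, mem_closure_iff]
      intro V hVopen hγV
      obtain ⟨e, hγe, hre⟩ := hS.isLocalHomeomorph_r γ
      set U : Set G := V ∩ interior Iso ∩ e.source with hU
      have hUopen' : IsOpen U := (hVopen.inter isOpen_interior).inter e.open_source
      have hγU : γ ∈ U := ⟨⟨hγV, hγ⟩, hγe⟩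
      have hOopen : IsOpen (S.r '' U) := by
        rw [hre]
        exact e.isOpen_image_of_subset_source hUopen' fun z hz => hz.2
      have hsγT : S.s γ ∈ closure T := hdense (S.s_mem_units γ)
      have hrγ : S.r γ ∈ S.r '' U := Set.mem_image_of_mem _ hγU
      have hrs : S.r γ = S.s γ := hγIso
      rw [hrs] at hrγ
      obtain ⟨t, htO, htT⟩ := (mem_closure_iff.mp hsγT) _ hOopen hrγ
      obtain ⟨δ, hδU, hδt⟩ := htO
      have hδIso' : δ ∈ Iso := interior_subset hδU.1.2
      have hδIso : S.r δ = S.s δ := hδIso'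
      have hδ : δ = t := htT.2 δ hδt (by rw [← hδIso, hδt])
      exact ⟨δ, hδU.1.1, hδ ▸ htT.1⟩
    · -- units ⊆ interior Iso
      exact interior_maximal hUIso hUopen
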